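/- Let V = (A₁|A₂|...|A_m) ∈ B. If at least m−1 of the coefficient matrices A₁, ..., A_m are extreme points of U_1 (i.e., there exists an index i₀ such that A_i ∈ extr U_1 for all i ≠ i₀), then V is an extreme point of B. -/

import Mathlib

/-- Sum of the `k` largest entries of `x`, as a supremum over `k`-element subsets. -/
noncomputable def maxSum (m : ℕ) (x : Fin m → ℝ) (k : ℕ) : ℝ :=
  sSup {r : ℝ | ∃ s : Finset (Fin m), s.card = k ∧ r = ∑ i ∈ s, x i}

/-- `x ≺ y` : `x` is majorized by `y`. -/
def IsMajorizedBy (m : ℕ) (x y : Fin m → ℝ) : Prop :=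
  ∀ k : ℕ, 1 ≤ k → k ≤ m - 1 → maxSum m x k ≤ maxSum m y k

/-- Conditions on the coefficients of a quadratic stochastic operator. -/
def QSOCoeffs (m : ℕ) (p : Fin m → Fin m → Fin m → ℝ) : Prop :=
  (∀ i j k, p i j k = p j i k) ∧ (∀ i j k, 0 ≤ p i j k) ∧ (∀ i j, ∑ k, p i j k = 1)

/-- The quadratic map determined by the coefficients. -/
def QSOMap (m : ℕ) (p : Fin m → Fin m → Fin m → ℝ) (x : Fin m → ℝ) : Fin m → ℝ :=
  fun k => ∑ i, ∑ j, p i j k * x i * x j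

/-- A doubly stochastic quadratic operator: `V x ≺ x` for all `x` in the simplex. -/
def IsDSQO (m : ℕ) (p : Fin m → Fin m → Fin m → ℝ) : Prop :=
  QSOCoeffs m p ∧ ∀ x ∈ stdSimplex ℝ (Fin m), IsMajorizedBy m (QSOMap m p x) x

/-- Extreme point of a set: cannot be a midpoint of two distinct points of the set. -/
def IsExtremePt {X : Type*} [AddCommGroup X] [Module ℝ X] (C : Set X) (x : X) : Prop :=
  x ∈ C ∧ ∀ y ∈ C, ∀ z ∈ C, x = (1 / 2 : ℝ) • (y + z) → y = z

/-- The set `U_1` of symmetric nonnegative matrices with all principal-block sums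
bounded by the block size and total sum `m`. -/
def U1 (m : ℕ) : Set (Matrix (Fin m) (Fin m) ℝ) :=
  {A | A.IsSymm ∧ (∀ i j, 0 ≤ A i j) ∧
    (∀ α : Finset (Fin m), ∑ i ∈ α, ∑ j ∈ α, A i j ≤ (α.card : ℝ)) ∧
    (∑ i, ∑ j, A i j = (m : ℝ))}

/-- The set of coefficient tensors of doubly stochastic quadratic operators. -/
def Bset (m : ℕ) : Set (Fin m → Fin m → Fin m → ℝ) := {p | IsDSQO m p}

section
variable (m : ℕ)

lemma bddAbove_maxSumSet (m k : ℕ) (x : Fin m → ℝ) :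
    BddAbove {r : ℝ | ∃ s : Finset (Fin m), s.card = k ∧ r = ∑ i ∈ s, x i} := by
  apply Set.Finite.bddAbove
  apply (Set.finite_range (fun s : Finset (Fin m) => ∑ i ∈ s, x i)).subset
  rintro r ⟨s, _, rfl⟩
  exact ⟨s, rfl⟩

lemma le_maxSum_one (m : ℕ) (x : Fin m → ℝ) (i : Fin m) : x i ≤ maxSum m x 1 :=
  le_csSup (bddAbove_maxSumSet m 1 x) ⟨{i}, by simp⟩

lemma maxSum_one_le (m : ℕ) (hm : 0 < m) (x : Fin m → ℝ) (c : ℝ) (hc : ∀ i, x i ≤ c) :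
    maxSum m x 1 ≤ c := by
  have hne : Set.Nonempty {r : ℝ | ∃ s : Finset (Fin m), s.card = 1 ∧ r = ∑ i ∈ s, x i} :=
    ⟨x ⟨0, hm⟩, ⟨{⟨0, hm⟩}, by simp, by simp⟩⟩
  refine csSup_le hne ?_
  rintro r ⟨s, hs, rfl⟩
  obtain ⟨i, rfl⟩ := Finset.card_eq_one.mp hs
  simpa using hc i

lemma QSOMap_indicator (m : ℕ) (p : Fin m → Fin m → Fin m → ℝ) (α : Finset (Fin m))
    (c : ℝ) (k : Fin m) :
    QSOMap m p (fun i => if i ∈ α then c else 0) k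
      = (∑ i ∈ α, ∑ j ∈ α, p i j k) * (c * c) := by
  unfold QSOMap
  rw [← Finset.sum_subset (Finset.subset_univ α)
    (fun i _ hi => Finset.sum_eq_zero (fun j _ => by simp [hi])), Finset.sum_mul]
  refine Finset.sum_congr rfl fun i hi => ?_
  rw [← Finset.sum_subset (Finset.subset_univ α)
    (fun j _ hj => by simp [hj]), Finset.sum_mul]
  refine Finset.sum_congr rfl fun j hj => ?_
  simp only [hi, hj, if_true]
  ring

lemma mat_mem_U1 (m : ℕ) (hm : 2 ≤ m) (p : Fin m → Fin m → Fin m → ℝ)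
    (hp : IsDSQO m p) (k : Fin m) :
    (Matrix.of fun a b => p a b k) ∈ U1 m := by
  obtain ⟨⟨hsym, hnn, hsum⟩, hmaj⟩ := hp
  have hm0 : 0 < m := by omega
  have h1m : (1:ℕ) ≤ m - 1 := by omega
  have hblock : ∀ α : Finset (Fin m), ∑ i ∈ α, ∑ j ∈ α, p i j k ≤ (α.card : ℝ) := by
    intro α
    rcases Finset.eq_empty_or_nonempty α with rfl | hne
    · simp
    have hcard : 0 < α.card := Finset.card_pos.mpr hne
    set N : ℝ := (α.card : ℝ) with hN
    have hNpos : (0:ℝ) < N := by rw [hN]; exact_mod_cast hcard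
    set x : Fin m → ℝ := fun i => if i ∈ α then 1 / N else 0 with hxdef
    have hx : x ∈ stdSimplex ℝ (Fin m) := by
      constructor
      · intro i; simp only [hxdef]; split <;> positivity
      · simp only [hxdef]
        rw [Finset.sum_ite_mem, Finset.univ_inter, Finset.sum_const, nsmul_eq_mul]
        field_simp
        exact hN.symm
    have hxle : ∀ i, x i ≤ 1 / N := by
      intro i; simp only [hxdef]; split
      · exact le_rfl
      · positivity
    have key : QSOMap m p x k ≤ 1 / N :=
      (le_maxSum_one m (QSOMap m p x) k).trans
        ((hmaj x hx 1 le_rfl h1m).trans (maxSum_one_le m hm0 x (1 / N) hxle))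
    rw [hxdef, QSOMap_indicator] at key
    set S : ℝ := ∑ i ∈ α, ∑ j ∈ α, p i j k with hS
    have := mul_le_mul_of_nonneg_right key (mul_pos hNpos hNpos).le
    calc S = S * (1 / N * (1 / N)) * (N * N) := by field_simp
      _ ≤ 1 / N * (N * N) := this
      _ = N := by field_simp
  refine ⟨?_, fun i j => hnn i j k, fun α => by simpa using hblock α, ?_⟩
  · ext i j
    simp only [Matrix.transpose_apply, Matrix.of_apply]
    exact hsym j i k
  -- total sum = m
  · set M : ℝ := (m : ℝ) with hM
    have hMpos : (0:ℝ) < M := by rw [hM]; exact_mod_cast hm0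
    set x : Fin m → ℝ := fun i => if i ∈ (Finset.univ : Finset (Fin m)) then 1 / M else 0
      with hxdef
    have hxval : ∀ i, x i = 1 / M := by intro i; simp [hxdef]
    have hx : x ∈ stdSimplex ℝ (Fin m) := by
      constructor
      · intro i; rw [hxval]; positivity
      · simp only [hxval, Finset.sum_const, Finset.card_univ, Fintype.card_fin, nsmul_eq_mul]
        field_simp
        exact hM.symm
    have hVle : ∀ j, QSOMap m p x j ≤ 1 / M := by
      intro j
      exact (le_maxSum_one m (QSOMap m p x) j).trans
        ((hmaj x hx 1 le_rfl h1m).trans (maxSum_one_le m hm0 x (1 / M) (fun i => (hxval i).le)))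
    have hVval : ∀ j, QSOMap m p x j = (∑ a, ∑ b, p a b j) * (1 / M * (1 / M)) := by
      intro j; rw [hxdef, QSOMap_indicator]
    have hVsum : ∑ j, QSOMap m p x j = 1 := by
      simp only [hVval]
      rw [← Finset.sum_mul]
      rw [Finset.sum_comm]
      have : ∀ a : Fin m, ∑ j, ∑ b, p a b j = (m : ℝ) := by
        intro a
        rw [Finset.sum_comm]
        simp [hsum]
      rw [Finset.sum_congr rfl fun a _ => this a]
      simp only [Finset.sum_const, Finset.card_univ, Fintype.card_fin, nsmul_eq_mul, ← hM]
      field_simp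
    have hVge : 1 / M ≤ QSOMap m p x k := by
      have herase : ∑ j ∈ Finset.univ.erase k, QSOMap m p x j ≤ ((m - 1 : ℕ) : ℝ) * (1 / M) := by
        have := Finset.sum_le_card_nsmul (Finset.univ.erase k) (QSOMap m p x) (1 / M)
          (fun j _ => hVle j)
        rwa [Finset.card_erase_of_mem (Finset.mem_univ k), Finset.card_univ, Fintype.card_fin,
          nsmul_eq_mul] at this
      have hadd : QSOMap m p x k + ∑ j ∈ Finset.univ.erase k, QSOMap m p x j = 1 := by
        rw [Finset.add_sum_erase _ _ (Finset.mem_univ k)]; exact hVsum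
      have hcast : ((m - 1 : ℕ) : ℝ) = M - 1 := by
        simp [hM, Nat.cast_sub (show 1 ≤ m by omega)]
      rw [hcast] at herase
      have : (M - 1) * (1 / M) = 1 - 1 / M := by field_simp
      rw [this] at herase
      linarith
    have heq : QSOMap m p x k = 1 / M := le_antisymm (hVle k) hVge
    rw [hVval] at heq
    have hM0 : M ≠ 0 := hMpos.ne'
    have : (∑ a, ∑ b, p a b k) = M := by
      field_simp at heq
      linarith
    simpa [hM] using this
end


/-- If at least `m - 1` of the coefficient matrices of a doubly stochastic quadratic
operator are extreme points of `U_1`, then the operator is an extreme point of `B`. -/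
theorem extreme_Bset_of_extreme_matrices (m : ℕ) (p : Fin m → Fin m → Fin m → ℝ)
    (hp : p ∈ Bset m) (i₀ : Fin m)
    (h : ∀ i : Fin m, i ≠ i₀ → IsExtremePt (U1 m) (Matrix.of fun a b => p a b i)) :
    IsExtremePt (Bset m) p := by
  refine ⟨hp, fun q hq r hr heq => ?_⟩
  have hpt : ∀ a b k, p a b k = (1 / 2 : ℝ) * (q a b k + r a b k) := by
    intro a b k
    have := congrFun (congrFun (congrFun heq a) b) k
    simpa using this
  rcases Nat.lt_or_ge m 2 with hm | hm
  · -- m = 0 or m = 1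
    interval_cases m
    · funext a; exact a.elim0
    · funext a b k
      have hq1 := hq.1.2.2 a b
      have hr1 := hr.1.2.2 a b
      rw [Fin.sum_univ_one] at hq1 hr1
      rw [Subsingleton.elim k 0, hq1, hr1]
  · -- m ≥ 2
    have hne : ∀ k : Fin m, k ≠ i₀ → ∀ a b, q a b k = r a b k := by
      intro k hk a b
      have hmat : (Matrix.of fun a b => p a b k)
          = (1 / 2 : ℝ) • ((Matrix.of fun a b => q a b k) + (Matrix.of fun a b => r a b k)) := by
        ext a b
        simp only [Matrix.of_apply, Matrix.smul_apply, Matrix.add_apply, smul_eq_mul]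
        exact hpt a b k
      have := (h k hk).2 _ (mat_mem_U1 m hm q hq k) _ (mat_mem_U1 m hm r hr k) hmat
      exact congrFun (congrFun this a) b
    funext a b k
    by_cases hk : k = i₀
    · subst hk
      have hq1 : q a b k + ∑ j ∈ Finset.univ.erase k, q a b j = 1 := by
        rw [Finset.add_sum_erase _ _ (Finset.mem_univ k)]; exact hq.1.2.2 a b
      have hr1 : r a b k + ∑ j ∈ Finset.univ.erase k, r a b j = 1 := by
        rw [Finset.add_sum_erase _ _ (Finset.mem_univ k)]; exact hr.1.2.2 a b
      have hsame : ∑ j ∈ Finset.univ.erase k, q a b j = ∑ j ∈ Finset.univ.erase k, r a b j :=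
        Finset.sum_congr rfl fun j hj => hne j (Finset.mem_erase.mp hj).1 a b
      linarith
    · exact hne k hk a b
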